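/- arXiv:1512.07122 — 2 statements merged into one kernel-verified Lean document; each statement's English description precedes it below -/
import Mathlib

section
/- Let (X,μ) be a probability space and f, g ∈ L^∞(X,μ)⁺ with f ≺_w g (submajorization). Let c, d ≥ 0 be such that ∫_X max{f,c} dμ = ∫_X max{g,d} dμ. Then max{f,c} ≺ max{g,d}, i.e., the waterfilling of f at level c is majorized by the waterfilling of g at level d. -/
open MeasureTheory

/-- The decreasing rearrangement of `f` with respect to `μ`:
`f*(s) = sup { t ≥ 0 : μ{x : f(x) > t} > s }`. -/
noncomputable def decRe {X : Type*} [MeasurableSpace X] (μ : Measure X) (f : X → ℝ) (s : ℝ) : ℝ :=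
  sSup {t : ℝ | 0 ≤ t ∧ s < (μ {x | t < f x}).toReal}

section Lemmas
variable {X : Type*} [MeasurableSpace X] (μ : Measure X) [IsProbabilityMeasure μ]
  {f : X → ℝ} {C : ℝ}

lemma lam_antitone : Antitone (fun t => (μ {x | t < f x}).toReal) := by
  intro a b hab
  exact ENNReal.toReal_mono (measure_ne_top μ _)
    (measure_mono (fun x hx => lt_of_le_of_lt hab hx))

lemma lam_le_one (t : ℝ) : (μ {x | t < f x}).toReal ≤ 1 := by
  have := measure_mono (μ := μ) (Set.subset_univ {x | t < f x})
  simpa using ENNReal.toReal_mono (by simp) this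

lemma decRe_nonneg (s : ℝ) : 0 ≤ decRe μ f s :=
  Real.sSup_nonneg (fun t ht => ht.1)

lemma mem_decRe_le (hC : ∀ x, f x ≤ C) {s t : ℝ} (hs : 0 ≤ s)
    (ht : t ∈ {t : ℝ | 0 ≤ t ∧ s < (μ {x | t < f x}).toReal}) : t ≤ C := by
  by_contra h
  push_neg at h
  have : {x | t < f x} = ∅ := by
    ext x; simp only [Set.mem_setOf_eq, Set.mem_empty_iff_false, iff_false, not_lt]
    exact le_of_lt (lt_of_le_of_lt (hC x) h)
  obtain ⟨ht0, hts⟩ := ht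
  rw [this] at hts
  simp at hts
  exact absurd hts (not_lt.mpr hs)

lemma decRe_bddAbove (hC : ∀ x, f x ≤ C) {s : ℝ} (hs : 0 ≤ s) :
    BddAbove {t : ℝ | 0 ≤ t ∧ s < (μ {x | t < f x}).toReal} :=
  ⟨C, fun t ht => mem_decRe_le μ hC hs ht⟩

lemma decRe_le_bound (hC : ∀ x, f x ≤ C) (hC0 : 0 ≤ C) {s : ℝ} (hs : 0 ≤ s) :
    decRe μ f s ≤ C :=
  Real.sSup_le (fun t ht => mem_decRe_le μ hC hs ht) hC0

lemma decRe_antitoneOn (hC : ∀ x, f x ≤ C) :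
    AntitoneOn (decRe μ f) (Set.Ici 0) := by
  intro a ha b hb hab
  apply Real.sSup_le _ (decRe_nonneg μ a)
  intro t ht
  exact le_csSup (decRe_bddAbove μ hC ha) ⟨ht.1, lt_of_le_of_lt hab ht.2⟩

lemma decRe_lt_iff (hmf : Measurable f) (hC : ∀ x, f x ≤ C) {s t : ℝ}
    (hs : 0 ≤ s) (ht : 0 ≤ t) :
    t < decRe μ f s ↔ s < (μ {x | t < f x}).toReal := by
  constructor
  · intro h
    by_contra hcon
    push_neg at hcon
    have : decRe μ f s ≤ t := by
      apply Real.sSup_le _ ht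
      intro t' ht'
      by_contra h'
      push_neg at h'
      have : (μ {x | t' < f x}).toReal ≤ (μ {x | t < f x}).toReal :=
        lam_antitone μ h'.le
      exact absurd ht'.2 (not_lt.mpr (this.trans hcon))
    exact absurd h (not_lt.mpr this)
  · intro h
    -- right continuity: {x | t < f x} = ⋃ n, {x | t + 1/(n+1) < f x}
    have hUnion : {x | t < f x} = ⋃ n : ℕ, {x | t + 1/(n+1) < f x} := by
      ext x
      simp only [Set.mem_setOf_eq, Set.mem_iUnion]
      constructor
      · intro hx
        obtain ⟨n, hn⟩ := exists_nat_one_div_lt (sub_pos.mpr hx)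
        exact ⟨n, by linarith [hn]⟩
      · rintro ⟨n, hn⟩
        have : (0:ℝ) < 1/(n+1) := by positivity
        linarith
    have hmono : Monotone (fun n : ℕ => {x | t + 1/(n+1) < f x}) := by
      intro m n hmn x hx
      simp only [Set.mem_setOf_eq] at *
      have : (1:ℝ)/(n+1) ≤ 1/(m+1) := by
        apply one_div_le_one_div_of_le (by positivity)
        exact_mod_cast by omega
      linarith
    have hcont : μ {x | t < f x} = ⨆ n : ℕ, μ {x | t + 1/(n+1) < f x} := by
      rw [hUnion]
      exact hmono.directed_le.measure_iUnion
    -- find n with s < λ(t + 1/(n+1))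
    by_contra hcon
    push_neg at hcon
    have hall : ∀ n : ℕ, (μ {x | t + 1/(n+1) < f x}).toReal ≤ s := by
      intro n
      by_contra h'
      push_neg at h'
      have htn : (0:ℝ) ≤ t + 1/(n+1) := by positivity
      have : t + 1/(n+1) ≤ decRe μ f s :=
        le_csSup (decRe_bddAbove μ hC hs) ⟨htn, h'⟩
      have hpos : (0:ℝ) < 1/(n+1) := by positivity
      linarith [hcon]
    have : μ {x | t < f x} ≤ ENNReal.ofReal s := by
      rw [hcont]
      apply iSup_le
      intro n
      rw [← ENNReal.ofReal_toReal (measure_ne_top μ _)]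
      exact ENNReal.ofReal_le_ofReal (hall n)
    have := ENNReal.toReal_mono (by simp) this
    rw [ENNReal.toReal_ofReal hs] at this
    exact absurd h (not_lt.mpr this)

end Lemmas

section Lemmas2
variable {X : Type*} [MeasurableSpace X] (μ : Measure X) [IsProbabilityMeasure μ]
  {f : X → ℝ} {C : ℝ}

lemma decRe_max_eq (hC : ∀ x, f x ≤ C) {c s : ℝ} (hc : 0 ≤ c)
    (hs : 0 ≤ s) (hs1 : s < 1) :
    decRe μ (fun x => max (f x) c) s = max (decRe μ f s) c := by
  set S := {t : ℝ | 0 ≤ t ∧ s < (μ {x | t < f x}).toReal} with hS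
  set S' := {t : ℝ | 0 ≤ t ∧ s < (μ {x | t < max (f x) c}).toReal} with hS'
  have hCc : ∀ x, max (f x) c ≤ max C c := fun x => max_le_max (hC x) le_rfl
  have hbdd' : BddAbove S' := decRe_bddAbove μ hCc hs
  have hbdd : BddAbove S := decRe_bddAbove μ hC hs
  have hmemlt : ∀ t, 0 ≤ t → t < c → t ∈ S' := by
    intro t ht0 htc
    refine ⟨ht0, ?_⟩
    have : {x | t < max (f x) c} = Set.univ := by
      ext x; simp only [Set.mem_setOf_eq, Set.mem_univ, iff_true]
      exact lt_of_lt_of_le htc (le_max_right _ _)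
    rw [this]
    simpa using hs1
  apply le_antisymm
  · apply Real.sSup_le _ (le_trans hc (le_max_right _ _))
    intro t ht
    rcases lt_or_ge t c with h | h
    · exact le_trans h.le (le_max_right _ _)
    · have : {x | t < max (f x) c} = {x | t < f x} := by
        ext x; simp only [Set.mem_setOf_eq, lt_max_iff]
        constructor
        · rintro (h' | h')
          · exact h'
          · exact absurd h' (not_lt.mpr h)
        · exact Or.inl
      obtain ⟨ht0, hts⟩ := ht
      simp only at hts
      rw [this] at hts
      exact le_trans (le_csSup hbdd ⟨ht0, hts⟩) (le_max_left _ _)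
  · apply max_le
    · apply Real.sSup_le _ (decRe_nonneg μ _)
      intro t ht
      apply le_csSup hbdd'
      refine ⟨ht.1, lt_of_lt_of_le ht.2 ?_⟩
      apply ENNReal.toReal_mono (measure_ne_top μ _)
      exact measure_mono (fun x hx => show t < max (f x) c from lt_of_lt_of_le hx (le_max_left _ _))
    · rcases eq_or_lt_of_le hc with h | h
      · rw [← h]; exact decRe_nonneg μ _
      · by_contra hcon
        push_neg at hcon
        have h2 : max (decRe μ (fun x => max (f x) c) s) 0 < c := by
          rw [max_eq_left (decRe_nonneg μ _)]; exact hcon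
        set t := (max (decRe μ (fun x => max (f x) c) s) 0 + c) / 2 with htdef
        have ht0 : 0 ≤ t := by
          have := le_max_right (decRe μ (fun x => max (f x) c) s) 0
          rw [htdef]; linarith
        have htc : t < c := by rw [htdef]; linarith
        have h5 : t ≤ decRe μ (fun x => max (f x) c) s :=
          le_csSup hbdd' (hmemlt t ht0 htc)
        have h3 : max (decRe μ (fun x => max (f x) c) s) 0 < t := by
          rw [htdef]; linarith
        have h4 : decRe μ (fun x => max (f x) c) s ≤ max (decRe μ (fun x => max (f x) c) s) 0 :=
          le_max_left _ _
        linarith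

lemma decRe_distrib (hmf : Measurable f) (hC : ∀ x, f x ≤ C) {t : ℝ} (ht : 0 ≤ t) :
    (volume.restrict (Set.Ioo (0:ℝ) 1)) {s | t < decRe μ f s} = μ {x | t < f x} := by
  rw [Measure.restrict_apply₀']
  · have : {s | t < decRe μ f s} ∩ Set.Ioo 0 1 = Set.Ioo 0 ((μ {x | t < f x}).toReal) := by
      ext s
      simp only [Set.mem_inter_iff, Set.mem_setOf_eq, Set.mem_Ioo]
      constructor
      · rintro ⟨h1, h2, h3⟩
        exact ⟨h2, (decRe_lt_iff μ hmf hC h2.le ht).mp h1⟩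
      · rintro ⟨h1, h2⟩
        have hle := lam_le_one (μ := μ) (f := f) t
        exact ⟨(decRe_lt_iff μ hmf hC h1.le ht).mpr h2, h1, lt_of_lt_of_le h2 hle⟩
    rw [this, Real.volume_Ioo, sub_zero, ENNReal.ofReal_toReal (measure_ne_top μ _)]
  · exact measurableSet_Ioo.nullMeasurableSet

end Lemmas2

section Lemmas3
open Set
variable {X : Type*} [MeasurableSpace X] (μ : Measure X) [IsProbabilityMeasure μ]
  {f : X → ℝ} {C : ℝ}

lemma integral_decRe (hmf : Measurable f) (hC : ∀ x, f x ≤ C) (hC0 : 0 ≤ C)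
    (hpos : ∀ x, 0 ≤ f x) :
    ∫ t in (0:ℝ)..1, decRe μ f t = ∫ x, f x ∂μ := by
  have hint_f : Integrable f μ := by
    refine (integrable_const C).mono' hmf.aestronglyMeasurable ?_
    exact Filter.Eventually.of_forall (fun x => by
      rw [Real.norm_eq_abs, abs_of_nonneg (hpos x)]; exact hC x)
  have h1 := hint_f.integral_eq_integral_meas_lt (Filter.Eventually.of_forall hpos)
  set D := fun s : ℝ => decRe μ f (max s 0) with hD
  have hDanti : Antitone D := fun a b hab =>
    decRe_antitoneOn μ hC (le_max_right a 0) (le_max_right b 0) (max_le_max hab le_rfl)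
  have hDmeas : Measurable D := hDanti.measurable
  have hDeq : ∀ s ∈ Ioo (0:ℝ) 1, D s = decRe μ f s := fun s hs => by
    rw [hD]; simp only; rw [max_eq_left hs.1.le]
  have hDint : Integrable D (volume.restrict (Ioo (0:ℝ) 1)) := by
    refine Integrable.mono' (g := fun _ => C) ?_ hDmeas.aestronglyMeasurable ?_
    · show IntegrableOn (fun _ => C) (Ioo (0:ℝ) 1) volume
      rw [integrableOn_const_iff]
      right; rw [Real.volume_Ioo]; simp
    · exact Filter.Eventually.of_forall (fun s => by
        rw [Real.norm_eq_abs, abs_of_nonneg (decRe_nonneg μ _)]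
        exact decRe_le_bound μ hC hC0 (le_max_right _ _))
  have hD2 := hDint.integral_eq_integral_meas_lt (Filter.Eventually.of_forall
    (fun s => decRe_nonneg μ _))
  have hset : ∀ t : ℝ, t ∈ Ioi (0:ℝ) →
      ((volume.restrict (Ioo (0:ℝ) 1)) {s | t < D s}).toReal = (μ {x | t < f x}).toReal := by
    intro t ht
    congr 1
    have hinter : {s | t < D s} ∩ Ioo (0:ℝ) 1 = {s | t < decRe μ f s} ∩ Ioo (0:ℝ) 1 := by
      ext s
      simp only [Set.mem_inter_iff, Set.mem_setOf_eq, and_congr_left_iff]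
      intro hs
      rw [hDeq s hs]
    rw [Measure.restrict_apply₀' measurableSet_Ioo.nullMeasurableSet, hinter,
      ← Measure.restrict_apply₀' measurableSet_Ioo.nullMeasurableSet,
      decRe_distrib μ hmf hC (le_of_lt ht)]
  have key : ∫ s in Ioo (0:ℝ) 1, decRe μ f s = ∫ x, f x ∂μ := by
    rw [← integral_congr_ae ((ae_restrict_iff' measurableSet_Ioo).mpr
      (Filter.Eventually.of_forall hDeq))]
    rw [hD2, h1]
    exact setIntegral_congr_fun measurableSet_Ioi hset
  rw [intervalIntegral.integral_of_le (zero_le_one), integral_Ioc_eq_integral_Ioo, key]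

lemma decRe_intervalIntegrable (hC : ∀ x, f x ≤ C) {a b : ℝ} (ha : 0 ≤ a) (hab : a ≤ b) :
    IntervalIntegrable (decRe μ f) volume a b := by
  apply AntitoneOn.intervalIntegrable
  apply (decRe_antitoneOn μ hC).mono
  rw [Set.uIcc_of_le hab]
  exact fun t htmem => le_trans ha htmem.1

lemma max_decRe_intervalIntegrable (hC : ∀ x, f x ≤ C) (c : ℝ) {a b : ℝ}
    (ha : 0 ≤ a) (hab : a ≤ b) :
    IntervalIntegrable (fun t => max (decRe μ f t) c) volume a b := by
  apply AntitoneOn.intervalIntegrable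
  intro x hx y hy hxy
  rw [Set.uIcc_of_le hab] at hx hy
  exact max_le_max ((decRe_antitoneOn μ hC) (le_trans ha hx.1) (le_trans ha hy.1) hxy) le_rfl

end Lemmas3

section Lemmas4
open Set intervalIntegral

lemma ae_ne_vol (r : ℝ) : ∀ᵐ x : ℝ, x ≠ r := by
  rw [MeasureTheory.ae_iff]
  simpa using Real.volume_singleton

lemma waterfill_aux {F G : ℝ → ℝ} {c s : ℝ} (hs : 0 ≤ s)
    (hFanti : AntitoneOn F (Icc 0 s))
    (hFi : IntervalIntegrable F volume 0 s)
    (hGi : IntervalIntegrable G volume 0 s)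
    (hFci : IntervalIntegrable (fun t => max (F t) c) volume 0 s)
    (hGci : IntervalIntegrable (fun t => max (G t) c) volume 0 s)
    (hsub : ∀ r, 0 ≤ r → r ≤ s → (∫ t in (0:ℝ)..r, F t) ≤ ∫ t in (0:ℝ)..r, G t) :
    (∫ t in (0:ℝ)..s, max (F t) c) ≤ ∫ t in (0:ℝ)..s, max (G t) c := by
  set A := {r ∈ Icc 0 s | c < F r} with hA
  rcases Set.eq_empty_or_nonempty A with hAe | hAne
  · -- F ≤ c on [0,s]
    have heq : EqOn (fun t => max (F t) c) (fun _ => c) (uIcc 0 s) := by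
      intro t htmem
      rw [uIcc_of_le hs] at htmem
      have : t ∉ A := by rw [hAe]; exact Set.notMem_empty t
      simp only [hA, Set.mem_setOf_eq, Set.mem_sep_iff, not_and, not_lt] at this
      exact max_eq_right (this htmem)
    rw [integral_congr heq]
    apply integral_mono_on hs (intervalIntegrable_const) hGci
    exact fun t _ => le_max_right _ _
  · have hAsub : A ⊆ Icc 0 s := fun r hr => hr.1
    have hAbdd : BddAbove A := ⟨s, fun r hr => hr.1.2⟩
    set r₀ := sSup A with hr₀
    have hr₀mem : 0 ≤ r₀ := le_csSup_of_le hAbdd hAne.some_mem hAne.some_mem.1.1 |>.trans le_rfl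
    have hr₀le : r₀ ≤ s := csSup_le hAne (fun r hr => hr.1.2)
    -- on (0, r₀) \ {r₀}: max (F t) c = F t ; on (r₀, s]: max (F t) c = c
    have hpiece1 : (∫ t in (0:ℝ)..r₀, max (F t) c) = ∫ t in (0:ℝ)..r₀, F t := by
      apply intervalIntegral.integral_congr_ae
      filter_upwards [ae_ne_vol r₀] with t htne htmem
      rw [uIoc_of_le hr₀mem] at htmem
      have htlt : t < r₀ := lt_of_le_of_ne htmem.2 htne
      obtain ⟨r, hrA, htr⟩ := exists_lt_of_lt_csSup hAne htlt
      have hFt : c < F t := lt_of_lt_of_le hrA.2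
        (hFanti ⟨htmem.1.le, le_trans (le_of_lt htr) hrA.1.2⟩ hrA.1 htr.le)
      exact max_eq_left hFt.le
    have hpiece2 : (∫ t in r₀..s, max (F t) c) = ∫ t in r₀..s, (c:ℝ) := by
      apply intervalIntegral.integral_congr_ae
      filter_upwards with t htmem
      rw [uIoc_of_le hr₀le] at htmem
      have : t ∉ A := fun hmem => absurd (le_csSup hAbdd hmem) (not_le.mpr htmem.1)
      simp only [hA, Set.mem_setOf_eq, Set.mem_sep_iff, not_and, not_lt] at this
      exact max_eq_right (this ⟨le_trans hr₀mem htmem.1.le, htmem.2⟩)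
    have hsplitF : (∫ t in (0:ℝ)..r₀, max (F t) c) + (∫ t in r₀..s, max (F t) c)
        = ∫ t in (0:ℝ)..s, max (F t) c := by
      apply integral_add_adjacent_intervals
      · exact hFci.mono_set (uIcc_subset_uIcc left_mem_uIcc
          (by rw [uIcc_of_le hs]; exact ⟨hr₀mem, hr₀le⟩))
      · exact hFci.mono_set (uIcc_subset_uIcc
          (by rw [uIcc_of_le hs]; exact ⟨hr₀mem, hr₀le⟩) right_mem_uIcc)
    have hsplitG : (∫ t in (0:ℝ)..r₀, max (G t) c) + (∫ t in r₀..s, max (G t) c)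
        = ∫ t in (0:ℝ)..s, max (G t) c := by
      apply integral_add_adjacent_intervals
      · exact hGci.mono_set (uIcc_subset_uIcc left_mem_uIcc
          (by rw [uIcc_of_le hs]; exact ⟨hr₀mem, hr₀le⟩))
      · exact hGci.mono_set (uIcc_subset_uIcc
          (by rw [uIcc_of_le hs]; exact ⟨hr₀mem, hr₀le⟩) right_mem_uIcc)
    have hGsub : IntervalIntegrable G volume 0 r₀ :=
      hGi.mono_set (uIcc_subset_uIcc left_mem_uIcc
        (by rw [uIcc_of_le hs]; exact ⟨hr₀mem, hr₀le⟩))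
    have hGcsub1 : IntervalIntegrable (fun t => max (G t) c) volume 0 r₀ :=
      hGci.mono_set (uIcc_subset_uIcc left_mem_uIcc
        (by rw [uIcc_of_le hs]; exact ⟨hr₀mem, hr₀le⟩))
    have hGcsub2 : IntervalIntegrable (fun t => max (G t) c) volume r₀ s :=
      hGci.mono_set (uIcc_subset_uIcc
        (by rw [uIcc_of_le hs]; exact ⟨hr₀mem, hr₀le⟩) right_mem_uIcc)
    calc (∫ t in (0:ℝ)..s, max (F t) c)
        = (∫ t in (0:ℝ)..r₀, F t) + ∫ t in r₀..s, (c:ℝ) := by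
          rw [← hsplitF, hpiece1, hpiece2]
      _ ≤ (∫ t in (0:ℝ)..r₀, G t) + ∫ t in r₀..s, (c:ℝ) := by
          gcongr
          exact hsub r₀ hr₀mem hr₀le
      _ ≤ (∫ t in (0:ℝ)..r₀, max (G t) c) + ∫ t in r₀..s, max (G t) c := by
          gcongr
          · exact integral_mono_on hr₀mem hGsub hGcsub1 (fun t _ => le_max_left _ _)
          · exact integral_mono_on hr₀le intervalIntegrable_const hGcsub2
              (fun t _ => le_max_right _ _)
      _ = ∫ t in (0:ℝ)..s, max (G t) c := hsplitG

end Lemmas4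


/-- Submajorization `g ≺_w f` of functions on a measure space. -/
def SubMaj {X : Type*} [MeasurableSpace X] (μ : Measure X) (g f : X → ℝ) : Prop :=
  ∀ s ∈ Set.Icc (0 : ℝ) 1, ∫ t in (0 : ℝ)..s, decRe μ g t ≤ ∫ t in (0 : ℝ)..s, decRe μ f t

/-- Majorization `g ≺ f` of functions on a measure space. -/
def MajF {X : Type*} [MeasurableSpace X] (μ : Measure X) (g f : X → ℝ) : Prop :=
  SubMaj μ g f ∧ (∫ t in (0 : ℝ)..1, decRe μ g t) = ∫ t in (0 : ℝ)..1, decRe μ f t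

/-- if `f ≺_w g` and the waterfillings have equal integrals, then
the waterfilling of `f` at level `c` is majorized by that of `g` at level `d`. -/
theorem waterfilling_majorization {X : Type*} [MeasurableSpace X] (μ : Measure X)
    [IsProbabilityMeasure μ] (f g : X → ℝ) (hf : Measurable f) (hg : Measurable g)
    (hfb : ∃ C : ℝ, ∀ x, f x ≤ C) (hgb : ∃ C : ℝ, ∀ x, g x ≤ C)
    (hfpos : ∀ x, 0 ≤ f x) (hgpos : ∀ x, 0 ≤ g x)
    (hsub : SubMaj μ f g) (c d : ℝ) (hc : 0 ≤ c) (hd : 0 ≤ d)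
    (heq : (∫ x, max (f x) c ∂μ) = ∫ x, max (g x) d ∂μ) :
    MajF μ (fun x => max (f x) c) (fun x => max (g x) d) := by
  obtain ⟨Cf, hCf⟩ := hfb
  obtain ⟨Cg, hCg⟩ := hgb
  set Cf₁ := max Cf 0 with hCf₁def
  set Cg₁ := max Cg 0 with hCg₁def
  have hCf₁ : ∀ x, f x ≤ Cf₁ := fun x => le_trans (hCf x) (le_max_left _ _)
  have hCg₁ : ∀ x, g x ≤ Cg₁ := fun x => le_trans (hCg x) (le_max_left _ _)
  have hCf₁0 : 0 ≤ Cf₁ := le_max_right _ _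
  have hCg₁0 : 0 ≤ Cg₁ := le_max_right _ _
  set Fs := decRe μ f with hFs
  set Gs := decRe μ g with hGs
  set Fm := fun t => max (Fs t) c with hFm
  set Gm := fun t => max (Gs t) d with hGm
  -- conversion lemmas
  have hconvF : ∀ s : ℝ, 0 ≤ s → s ≤ 1 →
      (∫ t in (0:ℝ)..s, decRe μ (fun x => max (f x) c) t) = ∫ t in (0:ℝ)..s, Fm t := by
    intro s h0 h1
    apply intervalIntegral.integral_congr_ae
    filter_upwards [ae_ne_vol 1] with t htne htmem
    rw [Set.uIoc_of_le h0] at htmem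
    have ht1 : t < 1 := lt_of_le_of_ne (le_trans htmem.2 h1) htne
    exact decRe_max_eq μ hCf₁ hc htmem.1.le ht1
  have hconvG : ∀ s : ℝ, 0 ≤ s → s ≤ 1 →
      (∫ t in (0:ℝ)..s, decRe μ (fun x => max (g x) d) t) = ∫ t in (0:ℝ)..s, Gm t := by
    intro s h0 h1
    apply intervalIntegral.integral_congr_ae
    filter_upwards [ae_ne_vol 1] with t htne htmem
    rw [Set.uIoc_of_le h0] at htmem
    have ht1 : t < 1 := lt_of_le_of_ne (le_trans htmem.2 h1) htne
    exact decRe_max_eq μ hCg₁ hd htmem.1.le ht1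
  -- total integrals
  have e1 : (∫ t in (0:ℝ)..1, decRe μ (fun x => max (f x) c) t) = ∫ x, max (f x) c ∂μ :=
    integral_decRe μ (hf.max measurable_const)
      (fun x => max_le_max (hCf₁ x) le_rfl) (le_max_of_le_left hCf₁0)
      (fun x => le_max_of_le_right hc)
  have e2 : (∫ t in (0:ℝ)..1, decRe μ (fun x => max (g x) d) t) = ∫ x, max (g x) d ∂μ :=
    integral_decRe μ (hg.max measurable_const)
      (fun x => max_le_max (hCg₁ x) le_rfl) (le_max_of_le_left hCg₁0)
      (fun x => le_max_of_le_right hd)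
  have etot : (∫ t in (0:ℝ)..1, decRe μ (fun x => max (f x) c) t)
      = ∫ t in (0:ℝ)..1, decRe μ (fun x => max (g x) d) t := by
    rw [e1, e2, heq]
  have E : (∫ t in (0:ℝ)..1, Fm t) = ∫ t in (0:ℝ)..1, Gm t := by
    rw [← hconvF 1 zero_le_one le_rfl, ← hconvG 1 zero_le_one le_rfl, etot]
  constructor
  · -- SubMaj
    intro s hsmem
    obtain ⟨hs0, hs1⟩ := hsmem
    rw [hconvF s hs0 hs1, hconvG s hs0 hs1]
    rcases le_or_gt c (max (Gs s) d) with hcase | hcase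
    · -- head estimate
      have step1 : (∫ t in (0:ℝ)..s, Fm t) ≤ ∫ t in (0:ℝ)..s, max (Gs t) c := by
        apply waterfill_aux hs0
        · exact (decRe_antitoneOn μ hCf₁).mono (fun t htmem => htmem.1)
        · exact decRe_intervalIntegrable μ hCf₁ le_rfl hs0
        · exact decRe_intervalIntegrable μ hCg₁ le_rfl hs0
        · exact max_decRe_intervalIntegrable μ hCf₁ c le_rfl hs0
        · exact max_decRe_intervalIntegrable μ hCg₁ c le_rfl hs0
        · exact fun r hr0 hrs => hsub r ⟨hr0, le_trans hrs hs1⟩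
      have step2 : (∫ t in (0:ℝ)..s, max (Gs t) c) ≤ ∫ t in (0:ℝ)..s, Gm t := by
        apply intervalIntegral.integral_mono_on hs0
          (max_decRe_intervalIntegrable μ hCg₁ c le_rfl hs0)
          (max_decRe_intervalIntegrable μ hCg₁ d le_rfl hs0)
        intro t htmem
        apply max_le (le_max_left _ _)
        refine le_trans hcase (max_le_max ?_ le_rfl)
        exact decRe_antitoneOn μ hCg₁ htmem.1 (le_trans htmem.1 htmem.2) htmem.2
      exact le_trans step1 step2
    · -- tail estimate
      have tail : (∫ t in s..1, Gm t) ≤ ∫ t in s..1, Fm t := by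
        apply intervalIntegral.integral_mono_on hs1
          (max_decRe_intervalIntegrable μ hCg₁ d hs0 hs1)
          (max_decRe_intervalIntegrable μ hCf₁ c hs0 hs1)
        intro t htmem
        have h1 : Gm t ≤ max (Gs s) d :=
          max_le_max (decRe_antitoneOn μ hCg₁ hs0 (le_trans hs0 htmem.1) htmem.1) le_rfl
        exact le_trans (le_trans h1 hcase.le) (le_max_right (Fs t) c)
      have hsf : (∫ t in (0:ℝ)..s, Fm t) + (∫ t in s..1, Fm t) = ∫ t in (0:ℝ)..1, Fm t :=
        intervalIntegral.integral_add_adjacent_intervals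
          (max_decRe_intervalIntegrable μ hCf₁ c le_rfl hs0)
          (max_decRe_intervalIntegrable μ hCf₁ c hs0 hs1)
      have hsg : (∫ t in (0:ℝ)..s, Gm t) + (∫ t in s..1, Gm t) = ∫ t in (0:ℝ)..1, Gm t :=
        intervalIntegral.integral_add_adjacent_intervals
          (max_decRe_intervalIntegrable μ hCg₁ d le_rfl hs0)
          (max_decRe_intervalIntegrable μ hCg₁ d hs0 hs1)
      linarith
  · exact etot
end

section
/- Lidskii additive inequality (vector form): for x, y ∈ ℝ^n, the vector x + y is majorized by x↓ + y↓, i.e., x + y ≺ x↓ + y↓. -/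
/-- Sum of the `k` largest entries of a finite real vector. -/
noncomputable def kMaxSum {n : ℕ} (a : Fin n → ℝ) (k : ℕ) : ℝ :=
  sSup ((fun S : Finset (Fin n) => ∑ i ∈ S, a i) '' {S : Finset (Fin n) | S.card = k})

/-- Vector majorization `a ≺ b` (possibly different lengths): partial sums of the
decreasing rearrangements compare, with equal total sums. -/
def Maj {n d : ℕ} (a : Fin n → ℝ) (b : Fin d → ℝ) : Prop :=
  (∀ k : ℕ, k ≤ min n d → kMaxSum a k ≤ kMaxSum b k) ∧ (∑ i, a i) = ∑ i, b i

/-- The decreasing rearrangement of a finite vector. -/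
noncomputable def dsort {n : ℕ} (a : Fin n → ℝ) (i : Fin n) : ℝ :=
  kMaxSum a (i + 1) - kMaxSum a i

lemma le_kMaxSum {n k : ℕ} (a : Fin n → ℝ) {S : Finset (Fin n)} (h : S.card = k) :
    ∑ i ∈ S, a i ≤ kMaxSum a k :=
  le_csSup (Set.toFinite _).bddAbove ⟨S, h, rfl⟩

lemma kMaxSum_exists {n k : ℕ} (hk : k ≤ n) (a : Fin n → ℝ) :
    ∃ S : Finset (Fin n), S.card = k ∧ kMaxSum a k = ∑ i ∈ S, a i := by
  obtain ⟨S, -, hS⟩ := Finset.exists_subset_card_eq (s := (Finset.univ : Finset (Fin n)))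
    (by simpa using hk)
  have hne : ((fun S : Finset (Fin n) => ∑ i ∈ S, a i) '' {S | S.card = k}).Nonempty :=
    ⟨_, S, hS, rfl⟩
  obtain ⟨T, hT, hsum⟩ := hne.csSup_mem (Set.toFinite _)
  exact ⟨T, hT, hsum.symm⟩

lemma kMaxSum_zero {n : ℕ} (a : Fin n → ℝ) : kMaxSum a 0 = 0 := by
  have : ((fun S : Finset (Fin n) => ∑ i ∈ S, a i) '' {S | S.card = 0}) = {0} := by
    ext r
    simp [Finset.card_eq_zero]
  rw [kMaxSum, this, csSup_singleton]

lemma fin_le_strictMono {k : ℕ} {g : Fin k → ℕ} (hg : StrictMono g) :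
    ∀ i : Fin k, (i : ℕ) ≤ g i := by
  intro ⟨i, hi⟩
  induction i with
  | zero => exact Nat.zero_le _
  | succ m ih =>
    have h1 : g ⟨m, Nat.lt_of_succ_lt hi⟩ < g ⟨m + 1, hi⟩ := hg (by simp [Fin.lt_def])
    have h2 := ih (Nat.lt_of_succ_lt hi)
    simp only [Fin.val_mk] at h1 h2 ⊢
    omega

lemma kMaxSum_comp_perm {n : ℕ} (a : Fin n → ℝ) (σ : Equiv.Perm (Fin n)) (k : ℕ) :
    kMaxSum (fun i => a (σ i)) k = kMaxSum a k := by
  unfold kMaxSum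
  congr 1
  ext r
  constructor
  · rintro ⟨S, hS, rfl⟩
    refine ⟨S.image σ, ?_, ?_⟩
    · simpa [Finset.card_image_of_injective _ σ.injective] using hS
    · simp only []
      rw [Finset.sum_image (fun i _ j _ h => σ.injective h)]
  · rintro ⟨S, hS, rfl⟩
    refine ⟨S.image σ.symm, ?_, ?_⟩
    · simpa [Finset.card_image_of_injective _ σ.symm.injective] using hS
    · simp only []
      rw [Finset.sum_image (fun i _ j _ h => σ.symm.injective h)]
      simp

lemma kMaxSum_antitone {n k : ℕ} (hk : k ≤ n) {b : Fin n → ℝ} (hb : Antitone b) :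
    kMaxSum b k = ∑ i : Fin k, b (Fin.castLE hk i) := by
  apply le_antisymm
  · obtain ⟨S, hSc, hSe⟩ := kMaxSum_exists hk b
    rw [hSe]
    have hrange : S = Finset.univ.map (S.orderEmbOfFin hSc).toEmbedding := by
      ext j
      simp only [Finset.mem_map, Finset.mem_univ, true_and]
      constructor
      · intro hj
        have : j ∈ Set.range (S.orderEmbOfFin hSc) := by
          rw [Finset.range_orderEmbOfFin]; exact hj
        obtain ⟨i, hi⟩ := this
        exact ⟨i, hi⟩
      · rintro ⟨i, rfl⟩
        exact Finset.orderEmbOfFin_mem S hSc i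
    rw [hrange, Finset.sum_map]
    apply Finset.sum_le_sum
    intro i _
    apply hb
    rw [Fin.le_def]
    have : (i : ℕ) ≤ (S.orderEmbOfFin hSc i : ℕ) := by
      apply fin_le_strictMono (g := fun j => ((S.orderEmbOfFin hSc j : Fin n) : ℕ))
      intro u v huv
      exact (S.orderEmbOfFin hSc).strictMono huv
    simpa using this
  · have hT : (Finset.univ.map (Fin.castLEEmb hk)).card = k := by simp
    have := le_kMaxSum b hT
    rwa [Finset.sum_map] at this

lemma dsort_eq {n : ℕ} (x : Fin n → ℝ) (σ : Equiv.Perm (Fin n))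
    (hw : Antitone (fun i => x (σ i))) : dsort x = fun i => x (σ i) := by
  funext i
  have h1 : (i : ℕ) + 1 ≤ n := i.2
  have h0 : (i : ℕ) ≤ n := le_of_lt i.2
  rw [dsort, ← kMaxSum_comp_perm x σ (i + 1), ← kMaxSum_comp_perm x σ (i : ℕ),
    kMaxSum_antitone h1 hw, kMaxSum_antitone h0 hw, Fin.sum_univ_castSucc]
  have hlast : Fin.castLE h1 (Fin.last i) = i := by
    apply Fin.ext; simp
  have hcast : ∀ j : Fin (i : ℕ), Fin.castLE h1 j.castSucc = Fin.castLE h0 j := by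
    intro j; apply Fin.ext; simp
  simp only [hlast, hcast]
  ring

theorem lidskii_additive' {n : ℕ} (x y : Fin n → ℝ) :
    (∀ k : ℕ, k ≤ min n n → kMaxSum (x + y) k ≤ kMaxSum (dsort x + dsort y) k) ∧
      (∑ i, (x + y) i) = ∑ i, (dsort x + dsort y) i := by
  obtain ⟨σx, hwx⟩ : ∃ σ : Equiv.Perm (Fin n), Antitone (fun i => x (σ i)) := by
    refine ⟨Tuple.sort (fun i => -x i), fun i j hij => ?_⟩
    have := Tuple.monotone_sort (fun i => -x i) hij
    simpa using this
  obtain ⟨σy, hwy⟩ : ∃ σ : Equiv.Perm (Fin n), Antitone (fun i => y (σ i)) := by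
    refine ⟨Tuple.sort (fun i => -y i), fun i j hij => ?_⟩
    have := Tuple.monotone_sort (fun i => -y i) hij
    simpa using this
  have hdx := dsort_eq x σx hwx
  have hdy := dsort_eq y σy hwy
  have hd : Antitone (dsort x + dsort y) := by
    rw [hdx, hdy]; exact hwx.add hwy
  have key : ∀ k : ℕ, k ≤ n →
      kMaxSum (dsort x + dsort y) k = kMaxSum x k + kMaxSum y k := by
    intro k hk
    rw [kMaxSum_antitone hk hd, ← kMaxSum_comp_perm x σx k, ← kMaxSum_comp_perm y σy k,
      kMaxSum_antitone hk hwx, kMaxSum_antitone hk hwy, ← Finset.sum_add_distrib]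
    simp [hdx, hdy]
  constructor
  · intro k hk
    rw [min_self] at hk
    obtain ⟨S, hSc, hSe⟩ := kMaxSum_exists hk (x + y)
    rw [key k hk, hSe]
    have : ∑ i ∈ S, (x + y) i = ∑ i ∈ S, x i + ∑ i ∈ S, y i := by
      simp [Finset.sum_add_distrib]
    rw [this]
    exact add_le_add (le_kMaxSum x hSc) (le_kMaxSum y hSc)
  · have h1 : ∑ i, (x + y) i = ∑ i, x i + ∑ i, y i := by
      simp [Finset.sum_add_distrib]
    have h2 : ∑ i, (dsort x + dsort y) i = ∑ i, x (σx i) + ∑ i, y (σy i) := by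
      simp [hdx, hdy, Finset.sum_add_distrib]
    rw [h1, h2, Equiv.sum_comp σx x, Equiv.sum_comp σy y]

/-- Lidskii additive inequality: `x + y ≺ x↓ + y↓`. -/
theorem lidskii_additive {n : ℕ} (x y : Fin n → ℝ) :
    Maj (x + y) (dsort x + dsort y) := by
  exact lidskii_additive' x y
end
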